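/- Let (X, μ) be a measure space with μ a finite measure, let f : X → ℝ be measurable with |f(x)| ≤ C for all x (C > 0), and let v : X → ℝ be measurable with 1 ≤ v(x) ≤ C′ for all x (C′ ≥ 1). If μ({x | f(x) > 0}) > 0, then the integral ∫_X f(x)·log(√(a² + f(x)²/v(x)²) − f(x)/v(x)) dμ(x) tends to −∞ as a → 0⁺. -/

import Mathlib

open Filter Real MeasureTheory

set_option maxHeartbeats 2000000 in
/-- Weighted form: if `μ` is a finite measure, `f` is measurable with `|f| ≤ C` (`C > 0`),
`v` is measurable with `1 ≤ v ≤ C′` (`C′ ≥ 1`), and `μ {f > 0} > 0`, then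
`∫ f · log (√(a² + f²/v²) − f/v) dμ → −∞` as `a → 0⁺`. -/
theorem weighted_integral_tendsto_atBot {X : Type*} [MeasurableSpace X] (μ : Measure X)
    [IsFiniteMeasure μ] (f v : X → ℝ) (hf : Measurable f) (hv : Measurable v)
    (C : ℝ) (hC : 0 < C) (hfC : ∀ x, |f x| ≤ C)
    (C' : ℝ) (hC' : 1 ≤ C') (hv1 : ∀ x, 1 ≤ v x) (hvC' : ∀ x, v x ≤ C')
    (hpos : 0 < μ {x | 0 < f x}) :
    Tendsto (fun a : ℝ =>
        ∫ x, f x * Real.log (Real.sqrt (a ^ 2 + (f x) ^ 2 / (v x) ^ 2) - f x / v x) ∂μ)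
      (nhdsWithin 0 (Set.Ioi 0)) atBot := by
  have hC'0 : (0:ℝ) < C' := lt_of_lt_of_le one_pos hC'
  have hlogC' : 0 ≤ Real.log C' := Real.log_nonneg hC'
  set K : ℝ := C * Real.log C' + 1/2 + C'/2 with hKdef
  have hK0 : 0 ≤ K := by
    have : 0 ≤ C * Real.log C' := mul_nonneg hC.le hlogC'
    have : 0 ≤ C'/2 := by linarith
    simp only [hKdef]; linarith
  have hKC' : C'/2 ≤ K := by
    have : 0 ≤ C * Real.log C' := mul_nonneg hC.le hlogC'
    simp only [hKdef]; linarith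
  -- integrability of f and f⁺
  have hfint : Integrable f μ :=
    (integrable_const C).mono' hf.aestronglyMeasurable
      (Filter.Eventually.of_forall fun x => by simpa using hfC x)
  have hfplus : Integrable (fun x => max (f x) 0) μ := hfint.pos_part
  set I : ℝ := ∫ x, max (f x) 0 ∂μ with hIdef
  have hI : 0 < I := by
    refine (integral_pos_iff_support_of_nonneg (fun x => le_max_right (f x) 0) hfplus).2 ?_
    refine lt_of_lt_of_le hpos (measure_mono ?_)
    intro x hx
    simp only [Function.mem_support]
    exact ne_of_gt (lt_max_iff.2 (Or.inl hx))
  -- the comparison function tends to -∞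
  have hlim : Tendsto (fun a : ℝ => Real.log a * (2 * I) + K * (μ Set.univ).toReal)
      (nhdsWithin 0 (Set.Ioi 0)) atBot := by
    exact tendsto_atBot_add_const_right _ _
      (Real.tendsto_log_nhdsGT_zero.atBot_mul_const (by positivity))
  refine tendsto_atBot_mono' _ ?_ hlim
  filter_upwards [Ioo_mem_nhdsGT_of_mem (Set.mem_Ico.2 ⟨le_refl (0:ℝ), zero_lt_one⟩)]
    with a ha
  obtain ⟨ha0, ha1⟩ := ha
  set M : ℝ := Real.sqrt (1 + C^2) + C with hMdef
  have hsqrt1 : (1:ℝ) ≤ Real.sqrt (1 + C^2) := by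
    have h := Real.sqrt_le_sqrt (show (1:ℝ) ≤ 1 + C^2 by nlinarith)
    rwa [Real.sqrt_one] at h
  have hM1 : 1 ≤ M := by simp only [hMdef]; linarith
  have hM0 : 0 < M := by linarith
  set g : X → ℝ := fun x => Real.sqrt (a ^ 2 + (f x) ^ 2 / (v x) ^ 2) - f x / v x with hgdef
  -- basic facts per point
  have key : ∀ x, 0 < Real.sqrt (a ^ 2 + (f x) ^ 2 / (v x) ^ 2) + f x / v x ∧
      g x * (Real.sqrt (a ^ 2 + (f x) ^ 2 / (v x) ^ 2) + f x / v x) = a ^ 2 ∧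
      Real.sqrt (a ^ 2 + (f x) ^ 2 / (v x) ^ 2) + f x / v x ≤ M ∧
      a ^ 2 / M ≤ g x ∧ g x ≤ M ∧ 0 < g x ∧
      |f x / v x| ≤ Real.sqrt (a ^ 2 + (f x) ^ 2 / (v x) ^ 2) := by
    intro x
    have hw0 : (0:ℝ) < v x := lt_of_lt_of_le one_pos (hv1 x)
    have htC : |f x| ≤ C := hfC x
    have hXnn : (0:ℝ) ≤ a ^ 2 + (f x) ^ 2 / (v x) ^ 2 := by positivity
    have hdivsq : (f x) ^ 2 / (v x) ^ 2 = (f x / v x) ^ 2 := (div_pow _ _ _).symm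
    have habs : |f x / v x| ≤ C := by
      rw [abs_div, abs_of_pos hw0]
      calc |f x| / v x ≤ |f x| / 1 := by
            apply div_le_div_of_nonneg_left (abs_nonneg _) one_pos (hv1 x)
        _ = |f x| := by ring
        _ ≤ C := htC
    have hlt : |f x / v x| < Real.sqrt (a ^ 2 + (f x) ^ 2 / (v x) ^ 2) := by
      rw [Real.lt_sqrt (abs_nonneg _), sq_abs, hdivsq]
      nlinarith
    have hd0 : 0 < Real.sqrt (a ^ 2 + (f x) ^ 2 / (v x) ^ 2) + f x / v x := by
      have := neg_abs_le (f x / v x)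
      linarith
    have hprod : g x * (Real.sqrt (a ^ 2 + (f x) ^ 2 / (v x) ^ 2) + f x / v x) = a ^ 2 := by
      have hsq : (Real.sqrt (a ^ 2 + (f x) ^ 2 / (v x) ^ 2)) ^ 2
          = a ^ 2 + (f x) ^ 2 / (v x) ^ 2 := Real.sq_sqrt hXnn
      have hexpand : g x * (Real.sqrt (a ^ 2 + (f x) ^ 2 / (v x) ^ 2) + f x / v x)
          = (Real.sqrt (a ^ 2 + (f x) ^ 2 / (v x) ^ 2)) ^ 2 - (f x / v x) ^ 2 := by
        simp only [hgdef]; ring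
      rw [hexpand, hsq, hdivsq]; ring
    have hsle : Real.sqrt (a ^ 2 + (f x) ^ 2 / (v x) ^ 2) ≤ Real.sqrt (1 + C^2) := by
      apply Real.sqrt_le_sqrt
      have h1 : (f x) ^ 2 / (v x) ^ 2 ≤ (f x) ^ 2 := by
        apply div_le_self (sq_nonneg _)
        nlinarith [hv1 x]
      nlinarith [sq_abs (f x), htC, abs_nonneg (f x)]
    have hdM : Real.sqrt (a ^ 2 + (f x) ^ 2 / (v x) ^ 2) + f x / v x ≤ M := by
      have := le_abs_self (f x / v x)
      simp only [hMdef]; linarith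
    have hgq : g x = a ^ 2 / (Real.sqrt (a ^ 2 + (f x) ^ 2 / (v x) ^ 2) + f x / v x) :=
      (eq_div_iff hd0.ne').2 hprod
    have hg0 : 0 < g x := by
      rw [hgq]; positivity
    have hglb : a ^ 2 / M ≤ g x := by
      rw [hgq]
      exact div_le_div_of_nonneg_left (by positivity) hd0 hdM
    have hgub : g x ≤ M := by
      have := neg_abs_le (f x / v x)
      simp only [hgdef, hMdef]
      have : -(f x / v x) ≤ C := by
        have := neg_abs_le (f x / v x); linarith [habs]
      linarith [hsle]
    exact ⟨hd0, hprod, hdM, hglb, hgub, hg0, hlt.le⟩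
  -- pointwise bound
  have hmono : ∀ x, f x * Real.log (g x) ≤ Real.log a * (2 * max (f x) 0) + K := by
    intro x
    obtain ⟨hd0, hprod, hdM, hglb, hgub, hg0, habsX⟩ := key x
    have hw0 : (0:ℝ) < v x := lt_of_lt_of_le one_pos (hv1 x)
    rcases lt_trichotomy (f x) 0 with ht | ht | ht
    · -- f x < 0 : g is bounded below away from 0
      have hu : 0 < -f x := neg_pos.2 ht
      have hsX : -(f x / v x) ≤ Real.sqrt (a ^ 2 + (f x) ^ 2 / (v x) ^ 2) :=
        le_trans (neg_le_abs _) habsX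
      have h1 : 2 * (-(f x / v x)) ≤ g x := by
        simp only [hgdef]; linarith
      have h2 : (-(2 * f x)) / C' ≤ 2 * (-(f x / v x)) := by
        have h3 : (-(2 * f x)) / C' ≤ (-(2 * f x)) / v x :=
          div_le_div_of_nonneg_left (by linarith) hw0 (hvC' x)
        have h4 : (-(2 * f x)) / v x = 2 * (-(f x / v x)) := by ring
        linarith
      have hlpos : 0 < (-(2 * f x)) / C' := div_pos (by linarith) hC'0
      have hlog : Real.log ((-(2 * f x)) / C') ≤ Real.log (g x) :=
        Real.log_le_log hlpos (by linarith)
      have hml : f x * Real.log (g x) ≤ f x * Real.log ((-(2 * f x)) / C') :=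
        mul_le_mul_of_nonpos_left hlog ht.le
      have h5 : Real.log (C' / (-(2 * f x))) ≤ C' / (-(2 * f x)) - 1 :=
        Real.log_le_sub_one_of_pos (div_pos hC'0 (by linarith))
      have h6 : Real.log ((-(2 * f x)) / C') = - Real.log (C' / (-(2 * f x))) := by
        rw [← Real.log_inv, inv_div]
      have h7 : f x * Real.log ((-(2 * f x)) / C')
          = (-f x) * Real.log (C' / (-(2 * f x))) := by
        rw [h6]; ring
      have h8 : (-f x) * Real.log (C' / (-(2 * f x)))
          ≤ (-f x) * (C' / (-(2 * f x)) - 1) :=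
        mul_le_mul_of_nonneg_left h5 hu.le
      have hfne : f x ≠ 0 := ne_of_lt ht
      have h9 : (-f x) * (C' / (-(2 * f x)) - 1) = C' / 2 + f x := by
        field_simp
        ring
      rw [max_eq_right ht.le]
      have h10 : f x * Real.log (g x) ≤ C' / 2 + f x := by
        rw [h7] at hml; linarith
      simp only [mul_zero, zero_add]
      refine le_trans h10 ?_
      linarith
    · -- f x = 0
      rw [ht, max_self]
      simp only [zero_mul, mul_zero, zero_add]
      exact hK0
    · -- f x > 0 : g ≤ a² v / (2 f)
      have hd2 : 2 * f x / v x ≤ Real.sqrt (a ^ 2 + (f x) ^ 2 / (v x) ^ 2) + f x / v x := by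
        have hsX : f x / v x ≤ Real.sqrt (a ^ 2 + (f x) ^ 2 / (v x) ^ 2) :=
          le_trans (le_abs_self _) habsX
        have : 2 * f x / v x = f x / v x + f x / v x := by ring
        linarith
      have hgq : g x = a ^ 2 / (Real.sqrt (a ^ 2 + (f x) ^ 2 / (v x) ^ 2) + f x / v x) :=
        (eq_div_iff hd0.ne').2 hprod
      have htv : 0 < 2 * f x / v x := by positivity
      have hgle : g x ≤ a ^ 2 * v x / (2 * f x) := by
        rw [hgq]
        calc a ^ 2 / (Real.sqrt (a ^ 2 + (f x) ^ 2 / (v x) ^ 2) + f x / v x)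
            ≤ a ^ 2 / (2 * f x / v x) :=
              div_le_div_of_nonneg_left (by positivity) htv hd2
          _ = a ^ 2 * v x / (2 * f x) := div_div_eq_mul_div _ _ _
      have hlog : Real.log (g x) ≤ 2 * Real.log a + Real.log (v x) - Real.log (2 * f x) := by
        have h1 : Real.log (g x) ≤ Real.log (a ^ 2 * v x / (2 * f x)) :=
          Real.log_le_log hg0 hgle
        rw [Real.log_div (by positivity) (by positivity),
          Real.log_mul (by positivity) (by positivity), Real.log_pow] at h1
        push_cast at h1
        linarith
      have hml : f x * Real.log (g x)
          ≤ f x * (2 * Real.log a + Real.log (v x) - Real.log (2 * f x)) :=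
        mul_le_mul_of_nonneg_left hlog ht.le
      have hexp : f x * (2 * Real.log a + Real.log (v x) - Real.log (2 * f x))
          = Real.log a * (2 * f x) + f x * Real.log (v x)
            + (-(f x * Real.log (2 * f x))) := by ring
      have h3 : f x * Real.log (v x) ≤ C * Real.log C' :=
        mul_le_mul (le_trans (le_abs_self _) (hfC x))
          (Real.log_le_log (lt_of_lt_of_le one_pos (hv1 x)) (hvC' x))
          (Real.log_nonneg (hv1 x)) hC.le
      have h4 : -(f x * Real.log (2 * f x)) ≤ 1/2 := by
        have h5 : Real.log (1 / (2 * f x)) ≤ 1 / (2 * f x) - 1 :=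
          Real.log_le_sub_one_of_pos (by positivity)
        rw [one_div, Real.log_inv] at h5
        have h6 := mul_le_mul_of_nonneg_left h5 ht.le
        have h7 : f x * ((2 * f x)⁻¹ - 1) = 1/2 - f x := by
          field_simp
        nlinarith [h6, h7]
      rw [max_eq_left ht.le]
      rw [hexp] at hml
      simp only [hKdef]
      linarith
  -- integrability of the integrand
  have hgmeas : Measurable g := by
    apply Measurable.sub
    · exact (Measurable.add measurable_const ((hf.pow_const 2).div (hv.pow_const 2))).sqrt
    · exact hf.div hv
  have hintg : Integrable (fun x => f x * Real.log (g x)) μ := by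
    refine (integrable_const (C * (|Real.log (a ^ 2 / M)| + |Real.log M|))).mono'
      (hf.mul (hgmeas.log)).aestronglyMeasurable
      (Filter.Eventually.of_forall fun x => ?_)
    obtain ⟨hd0, hprod, hdM, hglb, hgub, hg0, habsX⟩ := key x
    have hlb : Real.log (a ^ 2 / M) ≤ Real.log (g x) :=
      Real.log_le_log (by positivity) hglb
    have hub : Real.log (g x) ≤ Real.log M := Real.log_le_log hg0 hgub
    have habs : |Real.log (g x)| ≤ |Real.log (a ^ 2 / M)| + |Real.log M| := by
      have := abs_le_max_abs_abs hlb hub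
      have h2 : max |Real.log (a ^ 2 / M)| |Real.log M|
          ≤ |Real.log (a ^ 2 / M)| + |Real.log M| :=
        max_le (le_add_of_nonneg_right (abs_nonneg _)) (le_add_of_nonneg_left (abs_nonneg _))
      linarith
    rw [norm_mul, Real.norm_eq_abs, Real.norm_eq_abs]
    exact mul_le_mul (hfC x) habs (abs_nonneg _) hC.le
  -- conclude
  have hintw : Integrable (fun x => Real.log a * (2 * max (f x) 0) + K) μ := by
    exact ((hfplus.const_mul 2).const_mul (Real.log a)).add (integrable_const K)
  calc ∫ x, f x * Real.log (g x) ∂μ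
      ≤ ∫ x, (Real.log a * (2 * max (f x) 0) + K) ∂μ := integral_mono hintg hintw hmono
    _ = Real.log a * (2 * I) + K * (μ Set.univ).toReal := by
        rw [integral_add ((hfplus.const_mul 2).const_mul (Real.log a)) (integrable_const K),
          integral_const_mul, integral_const_mul, integral_const, smul_eq_mul]
        rw [measureReal_def, hIdef]
        ring
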